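/- Let n ≥ 2, p > 1, l ∈ ℕ, and let f : ℝⁿ → R̄ⁿ be any map. Let (x_m) be a sequence in ℝⁿ ∖ {0} with |x_m| → ∞. Suppose there exist a subsequence (x_{m_j}), a radius r > 0, and a map g : ℝⁿ → R̄ⁿ continuous at 0 (with respect to the chordal distance q) such that the maps x ↦ f(x_{m_j} + |x_{m_j}|^{2−p} x) converge to g uniformly with respect to q on the closed ball {x : |x| ≤ r}. Then (x_m) is not an M_p-sequence for f with parameter l. -/

import Mathlib

open Filter Topology Set
open scoped ENNReal NNReal

noncomputable section

/-- `E n` is the Euclidean space `ℝⁿ`. -/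
abbrev E (n : ℕ) := EuclideanSpace ℝ (Fin n)

/-- `RS n` is the one-point compactification `R̄ⁿ = ℝⁿ ∪ {∞}`, with `none` playing
the role of the point `∞`. -/
abbrev RS (n : ℕ) := Option (E n)

/-- The chordal (spherical) distance `q` on `R̄ⁿ`. -/
noncomputable def chordal {n : ℕ} : RS n → RS n → ℝ
  | some a, some b => ‖a - b‖ / (Real.sqrt (1 + ‖a‖ ^ 2) * Real.sqrt (1 + ‖b‖ ^ 2))
  | some a, none => 1 / Real.sqrt (1 + ‖a‖ ^ 2)
  | none, some b => 1 / Real.sqrt (1 + ‖b‖ ^ 2)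
  | none, none => 0

/-- The chordal diameter of a subset of `R̄ⁿ`. -/
noncomputable def qdiam {n : ℕ} (S : Set (RS n)) : ℝ :=
  sSup {d | ∃ a ∈ S, ∃ b ∈ S, d = chordal a b}

/-- The weighted ball `B_p(a, r) = {x : |x - a| < r |a|^(2-p)}`. -/
def Bp {n : ℕ} (p : ℝ) (a : E n) (r : ℝ) : Set (E n) :=
  {x | ‖x - a‖ < r * ‖a‖ ^ (2 - p)}

/-- `Qq α g x = limsup_{h → 0, h ≠ 0} q(g(x+h), g(x)) / |h|^α ∈ [0,∞]`. -/
noncomputable def Qq {n : ℕ} (α : ℝ) (g : E n → RS n) (x : E n) : ℝ≥0∞ :=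
  Filter.limsup (fun h : E n => ENNReal.ofReal (chordal (g (x + h)) (g x) / ‖h‖ ^ α))
    (𝓝[≠] (0 : E n))

/-- `(x_m)` is an `M_p`-sequence for `f` with parameter `l`:  `x_m ∈ ℝⁿ \ {0}`,
`|x_m| → ∞`, and for every subsequence and every `δ > 0` the set of values
`c ∈ R̄ⁿ` attained only finitely often by `f` in `⋃_k B_p(x_{m_k}, δ)` has at
most `l` elements. -/
def MpSeq {n : ℕ} (p : ℝ) (l : ℕ) (f : E n → RS n) (x : ℕ → E n) : Prop :=
  (∀ m, x m ≠ 0) ∧ Tendsto (fun m => ‖x m‖) atTop atTop ∧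
    ∀ φ : ℕ → ℕ, StrictMono φ → ∀ δ : ℝ, 0 < δ →
      {c : RS n | (f ⁻¹' {c} ∩ ⋃ k, Bp p (x (φ k)) δ).Finite}.Finite ∧
      {c : RS n | (f ⁻¹' {c} ∩ ⋃ k, Bp p (x (φ k)) δ).Finite}.ncard ≤ l

/-- `(x_m)` is a `μ_p`-sequence for `f` with parameter `l`: `x_m ∈ ℝⁿ \ {0}`,
`|x_m| → ∞`, and there are monotone decreasing null sequences `(L_m)`, `(r_m)` of
positive numbers such that `f(B_p(x_m, r_m))` covers `R̄ⁿ` except possibly `l`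
sets of chordal diameter at most `L_m`. -/
def MuSeq {n : ℕ} (p : ℝ) (l : ℕ) (f : E n → RS n) (x : ℕ → E n) : Prop :=
  (∀ m, x m ≠ 0) ∧ Tendsto (fun m => ‖x m‖) atTop atTop ∧
    ∃ L r : ℕ → ℝ, (∀ m, 0 < L m) ∧ (∀ m, 0 < r m) ∧ Antitone L ∧ Antitone r ∧
      Tendsto L atTop (𝓝 0) ∧ Tendsto r atTop (𝓝 0) ∧
      ∀ m, ∃ Es : Fin l → Set (RS n), (∀ j, qdiam (Es j) ≤ L m) ∧
        ∀ c : RS n, c ∉ ⋃ j, Es j → c ∈ f '' Bp p (x m) (r m)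

/-- Continuity of `g : ℝⁿ → R̄ⁿ` at a point, with respect to the chordal distance. -/
def QContinuousAt {n : ℕ} (g : E n → RS n) (x₀ : E n) : Prop :=
  ∀ ε : ℝ, 0 < ε → ∃ δ : ℝ, 0 < δ ∧ ∀ z : E n, ‖z - x₀‖ < δ → chordal (g z) (g x₀) < ε

open scoped RealInnerProductSpace

noncomputable def iota {n : ℕ} : RS n → WithLp 2 ((E n) × ℝ)
  | some a => (WithLp.equiv 2 _).symm ((2 / (1 + ‖a‖^2)) • a, (‖a‖^2 - 1)/(‖a‖^2 + 1))
  | none => (WithLp.equiv 2 _).symm (0, 1)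

lemma chordal_nonneg {n : ℕ} (a b : RS n) : 0 ≤ chordal a b := by
  cases a <;> cases b <;> simp only [chordal] <;> positivity

lemma iota_dist {n : ℕ} (a b : RS n) : ‖iota a - iota b‖ = 2 * chordal a b := by
  have key : ‖iota a - iota b‖^2 = (2 * chordal a b)^2 → ‖iota a - iota b‖ = 2 * chordal a b := by
    intro h
    exact (sq_eq_sq₀ (norm_nonneg _) (by have := chordal_nonneg a b; linarith)).mp h
  apply key
  rw [WithLp.prod_norm_sq_eq_of_L2]
  cases a with
  | none => cases b with
    | none => simp [iota, chordal]
    | some b =>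
      have hb : (0:ℝ) < 1 + ‖b‖^2 := by positivity
      have h1 : ((iota (none : RS n) - iota (some b)).fst : E n) = 0 - (2 / (1 + ‖b‖^2)) • b := rfl
      have h2 : ((iota (none : RS n) - iota (some b)).snd : ℝ) = 1 - (‖b‖^2 - 1)/(‖b‖^2 + 1) := rfl
      rw [h1, h2, chordal, zero_sub, norm_neg]
      simp only [norm_smul, Real.norm_eq_abs, mul_pow, sq_abs, div_pow, one_pow]
      rw [Real.sq_sqrt hb.le]
      field_simp
      ring
  | some a => cases b with
    | none =>
      have ha : (0:ℝ) < 1 + ‖a‖^2 := by positivity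
      have h1 : ((iota (some a) - iota (none : RS n)).fst : E n) = (2 / (1 + ‖a‖^2)) • a - 0 := rfl
      have h2 : ((iota (some a) - iota (none : RS n)).snd : ℝ) = (‖a‖^2 - 1)/(‖a‖^2 + 1) - 1 := rfl
      rw [h1, h2, chordal, sub_zero]
      simp only [norm_smul, Real.norm_eq_abs, mul_pow, sq_abs, div_pow, one_pow]
      rw [Real.sq_sqrt ha.le]
      field_simp
      ring
    | some b =>
      have ha : (0:ℝ) < 1 + ‖a‖^2 := by positivity
      have hb : (0:ℝ) < 1 + ‖b‖^2 := by positivity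
      have h1 : ((iota (some a) - iota (some b)).fst : E n) = (2/(1+‖a‖^2)) • a - (2/(1+‖b‖^2)) • b := rfl
      have h2 : ((iota (some a) - iota (some b)).snd : ℝ) = (‖a‖^2-1)/(‖a‖^2+1) - (‖b‖^2-1)/(‖b‖^2+1) := rfl
      rw [h1, h2, chordal]
      have e1 : ‖(2/(1+‖a‖^2)) • a - (2/(1+‖b‖^2)) • b‖^2
          = (2/(1+‖a‖^2))^2*‖a‖^2 - 2*((2/(1+‖a‖^2))*(2/(1+‖b‖^2))*⟪a,b⟫) + (2/(1+‖b‖^2))^2*‖b‖^2 := by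
        rw [norm_sub_sq_real, norm_smul, norm_smul, real_inner_smul_left, real_inner_smul_right,
            mul_pow, mul_pow, Real.norm_eq_abs, sq_abs, Real.norm_eq_abs, sq_abs]
        ring
      have e2 : ‖a - b‖^2 = ‖a‖^2 - 2*⟪a,b⟫ + ‖b‖^2 := norm_sub_sq_real a b
      rw [e1]
      simp only [Real.norm_eq_abs, mul_pow, sq_abs, div_pow, one_pow]
      rw [Real.sq_sqrt ha.le, Real.sq_sqrt hb.le, e2]
      field_simp
      ring

lemma chordal_triangle {n : ℕ} (a b c : RS n) :
    chordal a b ≤ chordal a c + chordal c b := by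
  have h : ‖iota a - iota b‖ ≤ ‖iota a - iota c‖ + ‖iota c - iota b‖ :=
    norm_sub_le_norm_sub_add_norm_sub _ _ _
  rw [iota_dist, iota_dist, iota_dist] at h
  linarith

lemma exists_infinite_far {n : ℕ} (hn : 2 ≤ n) (a : RS n) :
    ∃ ε₀ : ℝ, 0 < ε₀ ∧ ∃ T : Set (RS n), T.Infinite ∧ ∀ c ∈ T, ε₀ ≤ chordal c a := by
  set v : E n := EuclideanSpace.single (⟨0, by omega⟩ : Fin n) (1 : ℝ) with hv
  have hvn : ‖v‖ = 1 := by simp [hv, EuclideanSpace.norm_single]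
  cases a with
  | none =>
    refine ⟨1/2, by norm_num, (fun t : ℝ => (some (t • v) : RS n)) '' Set.Ioc 0 1, ?_, ?_⟩
    · apply Set.Infinite.image
      · intro t₁ h₁ t₂ h₂ h
        have h' : t₁ • v = t₂ • v := by injection h
        have hn1 : ‖t₁ • v‖ = ‖t₂ • v‖ := by rw [h']
        rw [norm_smul, norm_smul, hvn, mul_one, mul_one, Real.norm_eq_abs, Real.norm_eq_abs,
          abs_of_pos h₁.1, abs_of_pos h₂.1] at hn1
        exact hn1
      · exact Set.Ioc_infinite (by norm_num)
    · rintro c ⟨t, ht, rfl⟩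
      show (1:ℝ)/2 ≤ chordal (some (t • v)) none
      rw [chordal]
      have h1 : ‖t • v‖ ≤ 1 := by
        rw [norm_smul, hvn, mul_one, Real.norm_eq_abs, abs_of_pos ht.1]; exact ht.2
      have h2 : Real.sqrt (1 + ‖t • v‖^2) ≤ 2 := by
        rw [show (2:ℝ) = Real.sqrt 4 by
          rw [show (4:ℝ) = 2^2 by norm_num, Real.sqrt_sq]; norm_num]
        apply Real.sqrt_le_sqrt
        nlinarith [norm_nonneg (t • v)]
      have h3 : (0:ℝ) < Real.sqrt (1 + ‖t • v‖^2) := Real.sqrt_pos.mpr (by positivity)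
      rw [div_le_div_iff₀ (by norm_num) h3]
      linarith
  | some a₀ =>
    refine ⟨1/(2 * (Real.sqrt (1 + (‖a₀‖+1)^2) * Real.sqrt (1 + ‖a₀‖^2))), by positivity,
      (fun t : ℝ => (some (a₀ + t • v) : RS n)) '' Set.Icc (1/2) 1, ?_, ?_⟩
    · apply Set.Infinite.image
      · intro t₁ _ t₂ _ h
        have h' : a₀ + t₁ • v = a₀ + t₂ • v := by injection h
        have h'' : t₁ • v = t₂ • v := by
          have := add_left_cancel h'
          exact this
        have hn1 : ‖t₁ • v‖ = ‖t₂ • v‖ := by rw [h'']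
        rw [norm_smul, norm_smul, hvn, mul_one, mul_one, Real.norm_eq_abs, Real.norm_eq_abs] at hn1
        rename_i h₁ h₂
        rw [abs_of_pos (by linarith [h₁.1] : (0:ℝ) < t₁), abs_of_pos (by linarith [h₂.1] : (0:ℝ) < t₂)] at hn1
        exact hn1
      · exact Set.Icc_infinite (by norm_num)
    · rintro c ⟨t, ht, rfl⟩
      show _ ≤ chordal (some (a₀ + t • v)) (some a₀)
      rw [chordal]
      have htv : ‖t • v‖ = t := by
        rw [norm_smul, hvn, mul_one, Real.norm_eq_abs, abs_of_pos (by linarith [ht.1] : (0:ℝ) < t)]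
      have hnum : (1:ℝ)/2 ≤ ‖a₀ + t • v - a₀‖ := by
        rw [add_sub_cancel_left, htv]; exact ht.1
      have hden1 : Real.sqrt (1 + ‖a₀ + t • v‖^2) ≤ Real.sqrt (1 + (‖a₀‖+1)^2) := by
        apply Real.sqrt_le_sqrt
        have : ‖a₀ + t • v‖ ≤ ‖a₀‖ + 1 := by
          calc ‖a₀ + t • v‖ ≤ ‖a₀‖ + ‖t • v‖ := norm_add_le _ _
          _ ≤ ‖a₀‖ + 1 := by rw [htv]; linarith [ht.2]
        nlinarith [norm_nonneg (a₀ + t • v)]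
      have hp1 : (0:ℝ) < Real.sqrt (1 + ‖a₀ + t • v‖^2) := Real.sqrt_pos.mpr (by positivity)
      have hp2 : (0:ℝ) < Real.sqrt (1 + ‖a₀‖^2) := Real.sqrt_pos.mpr (by positivity)
      rw [div_le_div_iff₀ (by positivity) (by positivity)]
      calc 1 * (Real.sqrt (1 + ‖a₀ + t • v‖^2) * Real.sqrt (1 + ‖a₀‖^2))
          ≤ 1 * (Real.sqrt (1 + (‖a₀‖+1)^2) * Real.sqrt (1 + ‖a₀‖^2)) := by
            apply mul_le_mul_of_nonneg_left _ (by norm_num)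
            exact mul_le_mul_of_nonneg_right hden1 hp2.le
        _ ≤ ‖a₀ + t • v - a₀‖ * (2 * (Real.sqrt (1 + (‖a₀‖+1)^2) * Real.sqrt (1 + ‖a₀‖^2))) := by
            have hP : (0:ℝ) < Real.sqrt (1 + (‖a₀‖+1)^2) * Real.sqrt (1 + ‖a₀‖^2) :=
              mul_pos (Real.sqrt_pos.mpr (by positivity)) hp2
            nlinarith [mul_nonneg (by linarith : (0:ℝ) ≤ 2*‖a₀ + t • v - a₀‖ - 1) hP.le]

/-- If some rescaled subsequence `x ↦ f(x_{m_j} + |x_{m_j}|^(2-p) x)`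
converges uniformly on a closed ball `{|x| ≤ r}` (w.r.t. the chordal distance) to a
map `g` continuous at `0`, then `(x_m)` is not an `M_p`-sequence for `f`. -/
theorem stmt_8 (n : ℕ) (hn : 2 ≤ n) (p : ℝ) (hp : 1 < p) (l : ℕ)
    (f : E n → RS n) (x : ℕ → E n) (hx0 : ∀ m, x m ≠ 0)
    (hx : Tendsto (fun m => ‖x m‖) atTop atTop)
    (φ : ℕ → ℕ) (hφ : StrictMono φ) (r : ℝ) (hr : 0 < r)
    (g : E n → RS n) (hg : QContinuousAt g 0)
    (hconv : ∀ ε : ℝ, 0 < ε → ∃ N : ℕ, ∀ j ≥ N, ∀ z : E n, ‖z‖ ≤ r →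
      chordal (f (x (φ j) + ‖x (φ j)‖ ^ (2 - p) • z)) (g z) < ε) :
    ¬ MpSeq p l f x := by
  rintro ⟨-, -, hM⟩
  obtain ⟨ε₀, hε₀, T, hTinf, hT⟩ := exists_infinite_far hn (g 0)
  obtain ⟨δ₁, hδ₁, hgδ⟩ := hg (ε₀/3) (by linarith)
  obtain ⟨N, hN⟩ := hconv (ε₀/3) (by linarith)
  set ψ : ℕ → ℕ := fun k => φ (k + N) with hψdef
  have hψ : StrictMono ψ := fun a b h => hφ (by omega)
  set δ : ℝ := min δ₁ r with hδdef
  have hδ : 0 < δ := lt_min hδ₁ hr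
  obtain ⟨hfin, -⟩ := hM ψ hψ δ hδ
  apply hfin.not_infinite
  apply hTinf.mono
  intro c hc
  have hkey : ∀ y ∈ ⋃ k, Bp p (x (ψ k)) δ, f y ≠ c := by
    intro y hy hfy
    obtain ⟨S, ⟨k, rfl⟩, hyS⟩ := hy
    have hX0 : x (ψ k) ≠ 0 := hx0 _
    have hXp : (0:ℝ) < ‖x (ψ k)‖ := norm_pos_iff.mpr hX0
    have hR : (0:ℝ) < ‖x (ψ k)‖ ^ (2 - p) := Real.rpow_pos_of_pos hXp _
    set z : E n := (‖x (ψ k)‖ ^ (2 - p))⁻¹ • (y - x (ψ k)) with hzdef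
    have hz : ‖z‖ < δ := by
      rw [hzdef, norm_smul, Real.norm_eq_abs, abs_of_pos (inv_pos.mpr hR)]
      have : ‖y - x (ψ k)‖ < δ * ‖x (ψ k)‖ ^ (2 - p) := hyS
      rw [inv_mul_lt_iff₀ hR]
      linarith [this]
    have hy_eq : y = x (ψ k) + ‖x (ψ k)‖ ^ (2 - p) • z := by
      rw [hzdef, smul_inv_smul₀ hR.ne']
      abel
    have h1 : chordal (f y) (g z) < ε₀/3 := by
      rw [hy_eq]
      exact hN (k + N) (by omega) z (le_of_lt (lt_of_lt_of_le hz (min_le_right _ _)))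
    have h2 : chordal (g z) (g 0) < ε₀/3 := by
      apply hgδ
      rw [sub_zero]
      exact lt_of_lt_of_le hz (min_le_left _ _)
    have h3 : chordal c (g 0) ≤ chordal c (g z) + chordal (g z) (g 0) :=
      chordal_triangle _ _ _
    have h4 : ε₀ ≤ chordal c (g 0) := hT c hc
    rw [hfy] at h1
    linarith
  have : f ⁻¹' {c} ∩ ⋃ k, Bp p (x (ψ k)) δ = ∅ := by
    ext y
    simp only [Set.mem_inter_iff, Set.mem_preimage, Set.mem_singleton_iff, Set.mem_empty_iff_false,
      iff_false, not_and]
    intro hfy hy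
    exact hkey y hy hfy
  show (f ⁻¹' {c} ∩ ⋃ k, Bp p (x (ψ k)) δ).Finite
  rw [this]
  exact Set.finite_empty
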